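/- Suppose b : ℝ → ℝ is differentiable, b(0) > 0, and b'(t) ≥ -α(b(t)) whenever b(t) ≥ 0, where α is a locally Lipschitz class K function. Then b(t) ≥ 0 for all t ≥ 0 in the domain of definition. -/

import Mathlib

/-- Forward invariance of the zero-superlevel set of a barrier function
under a general locally Lipschitz class K function `α`. -/
theorem cbf_forward_invariance_classK (b α : ℝ → ℝ)
    (hb : Differentiable ℝ b) (hb0 : 0 < b 0)
    (hαlip : LocallyLipschitzOn (Set.Ici 0) α)
    (hαc : ContinuousOn α (Set.Ici 0)) (hαm : StrictMonoOn α (Set.Ici 0))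
    (hα0 : α 0 = 0) (hαmap : Set.MapsTo α (Set.Ici 0) (Set.Ici 0))
    (hineq : ∀ t : ℝ, 0 ≤ t → b t ≥ 0 → deriv b t ≥ -α (b t)) :
    ∀ t : ℝ, 0 ≤ t → b t ≥ 0 := by
  by_contra h
  push_neg at h
  obtain ⟨T, hT0, hTneg⟩ := h
  -- local Lipschitz constant of α near 0
  obtain ⟨K, U, hU, hKlip⟩ := hαlip (Set.self_mem_Ici (a := (0:ℝ)))
  obtain ⟨δ, hδ0, hδsub⟩ := mem_nhdsGE_iff_exists_Icc_subset.mp hU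
  have hαbound : ∀ x : ℝ, 0 ≤ x → x ≤ δ → α x ≤ K * x := by
    intro x hx hxδ
    have h1 := hKlip.dist_le_mul x (hδsub ⟨hx, hxδ⟩) 0 (hδsub ⟨le_refl 0, le_of_lt hδ0⟩)
    rw [Real.dist_eq, Real.dist_eq, hα0, sub_zero, sub_zero, abs_of_nonneg hx] at h1
    calc α x ≤ |α x| := le_abs_self _
    _ ≤ K * x := h1
  -- first crossing time
  set Z : Set ℝ := {t | 0 ≤ t ∧ b t ≤ 0} with hZ
  have hZne : Z.Nonempty := ⟨T, hT0, le_of_lt hTneg⟩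
  have hZclosed : IsClosed Z := by
    have : Z = Set.Ici 0 ∩ {t | b t ≤ 0} := rfl
    rw [this]
    exact isClosed_Ici.inter (isClosed_le hb.continuous continuous_const)
  have hZbdd : BddBelow Z := ⟨0, fun t ht => ht.1⟩
  set t₁ := sInf Z with ht₁def
  have ht₁mem : t₁ ∈ Z := hZclosed.csInf_mem hZne hZbdd
  obtain ⟨ht₁0, ht₁le⟩ := ht₁mem
  have ht₁pos : 0 < t₁ := by
    rcases lt_or_eq_of_le ht₁0 with h | h
    · exact h
    · exfalso; rw [← h] at ht₁le; linarith
  have hpos : ∀ t, 0 ≤ t → t < t₁ → 0 < b t := by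
    intro t ht htlt
    by_contra hc
    push_neg at hc
    exact absurd (csInf_le hZbdd ⟨ht, hc⟩) (not_le.mpr htlt)
  have hbt₁ : b t₁ = 0 := by
    rcases lt_or_eq_of_le ht₁le with h | h
    · exfalso
      -- IVT: zero strictly before t₁
      have hIVT := intermediate_value_Icc' (le_of_lt ht₁pos)
        (hb.continuous.continuousOn (s := Set.Icc 0 t₁))
      have h0mem : (0:ℝ) ∈ Set.Icc (b t₁) (b 0) := ⟨le_of_lt h, le_of_lt hb0⟩
      obtain ⟨c, hc, hbc⟩ := hIVT h0mem
      have hcZ : c ∈ Z := ⟨hc.1, le_of_eq hbc⟩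
      have : t₁ ≤ c := csInf_le hZbdd hcZ |>.trans_eq rfl
      have hct₁ : c < t₁ := by
        rcases lt_or_eq_of_le hc.2 with h2 | h2
        · exact h2
        · exfalso; rw [h2] at hbc; linarith
      linarith
    · exact h
  -- choose s < t₁ with b ≤ δ on [s, t₁]
  obtain ⟨ε, hε0, hεb⟩ := Metric.continuousAt_iff.mp hb.continuous.continuousAt δ hδ0
  set s := max (t₁ - ε / 2) (t₁ / 2) with hs
  have hs0 : 0 < s := lt_max_of_lt_right (by linarith)
  have hst₁ : s < t₁ := max_lt (by linarith) (by linarith)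
  have hbδ : ∀ t, s ≤ t → t ≤ t₁ → b t < δ := by
    intro t hts htt₁
    have h1 : t₁ - ε / 2 ≤ t := le_trans (le_max_left _ _) hts
    have hdist : dist t t₁ < ε := by
      rw [Real.dist_eq, abs_of_nonpos (by linarith)]
      linarith
    have := hεb hdist
    rw [Real.dist_eq, hbt₁, sub_zero] at this
    calc b t ≤ |b t| := le_abs_self _
    _ < δ := this
  -- g t = b t * exp(K t) is monotone on [s, t₁]
  set g : ℝ → ℝ := fun t => b t * Real.exp (K * t) with hg
  have hgderiv : ∀ t, HasDerivAt g
      (deriv b t * Real.exp (K * t) + b t * (Real.exp (K * t) * K)) t := by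
    intro t
    have h1 : HasDerivAt (fun t : ℝ => Real.exp (K * t)) (Real.exp (K * t) * K) t :=
      ((hasDerivAt_id t).const_mul (K : ℝ)).exp.congr_deriv (by simp [mul_comm])
    exact (hb t).hasDerivAt.mul h1
  have hmono : MonotoneOn g (Set.Icc s t₁) := by
    apply monotoneOn_of_deriv_nonneg (convex_Icc s t₁)
    · exact (hb.continuous.mul (Real.continuous_exp.comp (continuous_const.mul continuous_id))).continuousOn
    · intro t ht
      exact ((hgderiv t).differentiableAt).differentiableWithinAt
    · intro t ht
      rw [interior_Icc] at ht
      rw [(hgderiv t).deriv]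
      have ht0 : 0 ≤ t := le_of_lt (lt_of_lt_of_le hs0 (le_of_lt ht.1))
      have hbt : 0 < b t := hpos t ht0 ht.2
      have hbtδ : b t < δ := hbδ t (le_of_lt ht.1) (le_of_lt ht.2)
      have h1 : deriv b t ≥ -α (b t) := hineq t ht0 (le_of_lt hbt)
      have h2 : α (b t) ≤ K * b t := hαbound (b t) (le_of_lt hbt) (le_of_lt hbtδ)
      have h3 : deriv b t ≥ -(K * b t) := by linarith
      have hexp : 0 < Real.exp (K * t) := Real.exp_pos _
      nlinarith [hexp]
  have h1 : g s ≤ g t₁ := hmono ⟨le_refl s, le_of_lt hst₁⟩ ⟨le_of_lt hst₁, le_refl t₁⟩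
      (le_of_lt hst₁)
  have hgs : 0 < g s := mul_pos (hpos s (le_of_lt hs0) hst₁) (Real.exp_pos _)
  have hgt₁ : g t₁ = 0 := by rw [hg]; simp [hbt₁]
  linarith
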